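/- If (Ũ₁^{t₁⁰,y₁⁰,y₂⁰,δ}, Ũ₂^{x₂⁰,y₂⁰,δ}) is an admissible pair of type 2 at scale δ, then for all z₁ ∈ Ũ₁^{t₁⁰,y₁⁰,y₂⁰,δ} and z₂ ∈ Ũ₂^{x₂⁰,y₂⁰,δ} one has |τ_{z₁}(z₁,z₂)| ∼_{1000} C₀² ε ρ² (1 ∨ δ) and |τ_{z₂}(z₁,z₂)| ∼_8 C₀² ε ρ² δ. -/

import Mathlib

open Set MeasureTheory ENNReal Pointwise

noncomputable section

/-- `h` is a perturbation function of cubic type on `[-1,1]`,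
with constants `C₃ > 0` and `Cl l` for `l ≥ 4`. -/
def CubicType (C₃ : ℝ) (Cl : ℕ → ℝ) (h : ℝ → ℝ) : Prop :=
  ContDiff ℝ (⊤ : ℕ∞) h ∧ h 0 = 0 ∧ deriv h 0 = 0 ∧ deriv (deriv h) 0 = 0 ∧
  (∀ y ∈ Icc (-1 : ℝ) 1,
      C₃ / 4 ≤ |deriv (deriv (deriv h)) y| ∧ |deriv (deriv (deriv h)) y| ≤ C₃) ∧
  (∀ l : ℕ, 4 ≤ l → ∀ y ∈ Icc (-1 : ℝ) 1, |iteratedDeriv l h y| ≤ Cl l)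

/-- The transversality quantity `τ_z(z₁,z₂)` for the phase `φ(x,y) = xy + ε h(y)`. -/
def tau (ε : ℝ) (h : ℝ → ℝ) (z z₁ z₂ : ℝ × ℝ) : ℝ :=
  z₂.1 - z₁.1 + ε * (deriv h z₂.2 - deriv h z₁.2
      - (1 / 2) * deriv (deriv h) z.2 * (z₂.2 - z₁.2))

/-- A (positive) dyadic number. -/
def IsDyadic (x : ℝ) : Prop := ∃ k : ℤ, x = 2 ^ k

/-- The set `Ũ₁^{t₁⁰, y₁⁰, y₂⁰, δ}` (type 2). -/
def U1tset (h : ℝ → ℝ) (ε ρ δ t₁0 y₁0 y₂0 : ℝ) : Set (ℝ × ℝ) :=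
  {z | 0 ≤ z.2 - y₁0 ∧ z.2 - y₁0 < ρ ∧
    0 ≤ z.1 - t₁0 + ε * (deriv h z.2 - deriv h y₂0 - deriv (deriv h) y₂0 / 2 * (z.2 - y₂0)) ∧
    z.1 - t₁0 + ε * (deriv h z.2 - deriv h y₂0 - deriv (deriv h) y₂0 / 2 * (z.2 - y₂0))
      < ε * ρ ^ 2 * δ}

/-- The set `Ũ₂^{x₂⁰, y₂⁰, δ}` (type 2). -/
def U2tset (h : ℝ → ℝ) (ε ρ δ x₂0 y₂0 : ℝ) : Set (ℝ × ℝ) :=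
  {z | 0 ≤ z.2 - y₂0 ∧ z.2 - y₂0 < ρ * min 1 δ ∧
    0 ≤ z.1 - x₂0 + ε * (deriv (deriv h) y₂0 / 2) * (z.2 - y₂0) ∧
    z.1 - x₂0 + ε * (deriv (deriv h) y₂0 / 2) * (z.2 - y₂0) < ε * ρ ^ 2 * δ}

/-- The base point abscissa `x₁⁰` determined by `t₁⁰, y₁⁰, y₂⁰` (type 2). -/
def x10 (h : ℝ → ℝ) (ε t₁0 y₁0 y₂0 : ℝ) : ℝ :=
  t₁0 - ε * (deriv h y₁0 - deriv h y₂0 - deriv (deriv h) y₂0 / 2 * (y₁0 - y₂0))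

/-- `(Ũ₁^{t₁⁰,y₁⁰,y₂⁰,δ}, Ũ₂^{x₂⁰,y₂⁰,δ})` is an admissible pair of type 2 at scales
`δ, ρ`, contained in `V_{j₁,ρ} × V_{j₂,ρ}` (so `y₁⁰ = j₁ ρ`). -/
def Adm2 (h : ℝ → ℝ) (ε ρ δ C₀ : ℝ) (j₁ j₂ : ℤ) (t₁0 y₂0 x₂0 : ℝ) : Prop :=
  (∃ n : ℤ, t₁0 = -1 + (n : ℝ) * (ε * ρ ^ 2 * δ)) ∧ t₁0 ∈ Ico (-1 : ℝ) 1 ∧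
  (∃ n : ℤ, x₂0 = -1 + (n : ℝ) * (ε * ρ ^ 2 * δ)) ∧ x₂0 ∈ Ico (-1 : ℝ) 1 ∧
  (∃ n : ℤ, y₂0 = (j₂ : ℝ) * ρ + (n : ℝ) * (ρ * min 1 δ)) ∧
  (j₂ : ℝ) * ρ ≤ y₂0 ∧ y₂0 + ρ * min 1 δ ≤ (j₂ : ℝ) * ρ + ρ ∧
  C₀ ^ 2 / 4 * (ε * ρ ^ 2 * δ) ≤ |t₁0 - x₂0| ∧
  |t₁0 - x₂0| < 4 * C₀ ^ 2 * (ε * ρ ^ 2 * δ) ∧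
  C₀ ^ 2 / 512 * (ε * ρ ^ 2 * max 1 δ) ≤
      |tau ε h (x10 h ε t₁0 ((j₁ : ℝ) * ρ) y₂0, (j₁ : ℝ) * ρ)
        (x10 h ε t₁0 ((j₁ : ℝ) * ρ) y₂0, (j₁ : ℝ) * ρ) (x₂0, y₂0)| ∧
  |tau ε h (x10 h ε t₁0 ((j₁ : ℝ) * ρ) y₂0, (j₁ : ℝ) * ρ)
        (x10 h ε t₁0 ((j₁ : ℝ) * ρ) y₂0, (j₁ : ℝ) * ρ) (x₂0, y₂0)|
      < 5 * C₀ ^ 2 * (ε * ρ ^ 2 * max 1 δ)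

section helpers

lemma uIcc_sub_Icc {a b : ℝ} (ha : a ∈ Icc (-1:ℝ) 1) (hb : b ∈ Icc (-1:ℝ) 1) :
    uIcc a b ⊆ Icc (-1:ℝ) 1 := by
  rw [uIcc]
  intro x hx
  obtain ⟨h1, h2⟩ := hx
  exact ⟨le_trans (le_inf ha.1 hb.1) h1, le_trans h2 (sup_le ha.2 hb.2)⟩

lemma abs_sub_le_of_uIcc {a b x : ℝ} (hx : x ∈ uIcc a b) : |x - a| ≤ |b - a| := by
  rcases mem_uIcc.1 hx with ⟨h1, h2⟩ | ⟨h1, h2⟩ <;>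
    rw [abs_sub_le_iff] <;>
    constructor <;>
    cases abs_cases (b - a) <;>
    nlinarith [abs_nonneg (b-a), le_abs_self (b-a), neg_abs_le (b-a)]

lemma deriv2_diff {h : ℝ → ℝ} (hh : ContDiff ℝ (⊤ : ℕ∞) h) :
    Differentiable ℝ (deriv (deriv h)) := by
  have h1 : ContDiff ℝ (⊤ : ℕ∞) (deriv h) := (contDiff_infty_iff_deriv.1 hh).2
  have h2 : ContDiff ℝ (⊤ : ℕ∞) (deriv (deriv h)) := (contDiff_infty_iff_deriv.1 h1).2
  exact (contDiff_infty_iff_deriv.1 h2).1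

lemma lip2 {h : ℝ → ℝ} (hh : ContDiff ℝ (⊤ : ℕ∞) h) {C₃ : ℝ}
    (hb : ∀ y ∈ Icc (-1:ℝ) 1, |deriv (deriv (deriv h)) y| ≤ C₃)
    {a b : ℝ} (ha : a ∈ Icc (-1:ℝ) 1) (hbm : b ∈ Icc (-1:ℝ) 1) :
    |deriv (deriv h) b - deriv (deriv h) a| ≤ C₃ * |b - a| := by
  have hsub := uIcc_sub_Icc ha hbm
  have := Convex.norm_image_sub_le_of_norm_hasDerivWithin_le
    (f := deriv (deriv h)) (f' := deriv (deriv (deriv h))) (s := uIcc a b)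
    (fun x hx => ((deriv2_diff hh) x).hasDerivAt.hasDerivWithinAt)
    (fun x hx => by rw [Real.norm_eq_abs]; exact hb x (hsub hx))
    (convex_uIcc a b) (left_mem_uIcc) (right_mem_uIcc)
  simpa [Real.norm_eq_abs] using this

lemma taylor2' {h : ℝ → ℝ} (hh : ContDiff ℝ (⊤ : ℕ∞) h) {C₃ : ℝ}
    (hb : ∀ y ∈ Icc (-1:ℝ) 1, |deriv (deriv (deriv h)) y| ≤ C₃)
    {a b : ℝ} (ha : a ∈ Icc (-1:ℝ) 1) (hbm : b ∈ Icc (-1:ℝ) 1) :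
    |deriv h b - deriv h a - deriv (deriv h) a * (b - a)| ≤ C₃ * (b - a)^2 := by
  have hsub := uIcc_sub_Icc ha hbm
  have hd1 : Differentiable ℝ (deriv h) := by
    have h1 : ContDiff ℝ (⊤ : ℕ∞) (deriv h) := (contDiff_infty_iff_deriv.1 hh).2
    exact (contDiff_infty_iff_deriv.1 h1).1
  have key := Convex.norm_image_sub_le_of_norm_hasDerivWithin_le
    (f := fun y => deriv h y - deriv (deriv h) a * y)
    (f' := fun x => deriv (deriv h) x - deriv (deriv h) a) (s := uIcc a b)
    (fun x hx => by
      have : HasDerivAt (fun y => deriv h y - deriv (deriv h) a * y)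
          (deriv (deriv h) x - deriv (deriv h) a) x := by
        exact (hd1 x).hasDerivAt.sub (by simpa using (hasDerivAt_id' x).const_mul (deriv (deriv h) a))
      exact this.hasDerivWithinAt)
    (fun x hx => by
      rw [Real.norm_eq_abs]
      calc |deriv (deriv h) x - deriv (deriv h) a| ≤ C₃ * |x - a| :=
            lip2 hh hb ha (hsub hx)
        _ ≤ C₃ * |b - a| := by
            have h0 : (0:ℝ) ≤ C₃ := le_trans (abs_nonneg _) (hb 0 (by norm_num))
            exact mul_le_mul_of_nonneg_left (abs_sub_le_of_uIcc hx) h0)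
    (convex_uIcc a b) (left_mem_uIcc) (right_mem_uIcc)
  rw [Real.norm_eq_abs, Real.norm_eq_abs] at key
  calc |deriv h b - deriv h a - deriv (deriv h) a * (b - a)|
      = |deriv h b - deriv (deriv h) a * b - (deriv h a - deriv (deriv h) a * a)| := by
        ring_nf
    _ ≤ C₃ * |b - a| * |b - a| := key
    _ = C₃ * (b - a)^2 := by rw [mul_assoc, ← abs_mul, abs_mul_self]; ring

lemma const_bound {C₃ C₀ : ℝ} (hC₃ : 0 ≤ C₃) (hC₀ : 8192 * (1 + C₃) ≤ C₀) :
    1 + C₃ + 3 * C₃ * C₀ / 2 ≤ C₀ ^ 2 / 2048 := by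
  have h1 : (1:ℝ) ≤ C₀ := by linarith
  nlinarith [mul_le_mul_of_nonneg_right hC₀ (show (0:ℝ) ≤ C₀ by linarith),
    mul_nonneg hC₃ (show (0:ℝ) ≤ C₀ by linarith)]

end helpers

set_option maxHeartbeats 4000000 in
/-- Lemma 3.4 (Lemma `sizeofdeltas2`): on an admissible pair of type 2 at scale `δ`,
`|τ_{z₁}(z₁,z₂)| ∼₁₀₀₀ C₀² ε ρ² (1 ∨ δ)` and `|τ_{z₂}(z₁,z₂)| ∼₈ C₀² ε ρ² δ`. -/
theorem sizeofdeltas_type2 (C₃ : ℝ) (hC₃ : 0 < C₃) (Cl : ℕ → ℝ) :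
    ∃ C₀₀ : ℝ, 1 ≤ C₀₀ ∧
    ∀ h : ℝ → ℝ, CubicType C₃ Cl h →
    ∀ ε ρ δ C₀ : ℝ, 0 < ε → ε ≤ 1 → 0 < ρ → ρ ≤ 1 → 0 < δ → ε * ρ ^ 2 * δ ≤ 1 →
      IsDyadic ρ → IsDyadic δ → IsDyadic C₀ → C₀₀ ≤ C₀ →
    ∀ j₁ j₂ : ℤ, C₀ / 8 < |(j₂ : ℝ) - (j₁ : ℝ)| → |(j₂ : ℝ) - (j₁ : ℝ)| < C₀ / 2 →
      -1 ≤ (j₁ : ℝ) * ρ → (j₁ : ℝ) * ρ + ρ ≤ 1 → -1 ≤ (j₂ : ℝ) * ρ → (j₂ : ℝ) * ρ + ρ ≤ 1 →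
    ∀ t₁0 y₂0 x₂0 : ℝ, Adm2 h ε ρ δ C₀ j₁ j₂ t₁0 y₂0 x₂0 →
    ∀ z₁ ∈ U1tset h ε ρ δ t₁0 ((j₁ : ℝ) * ρ) y₂0, ∀ z₂ ∈ U2tset h ε ρ δ x₂0 y₂0,
      C₀ ^ 2 * ε * ρ ^ 2 * max 1 δ / 1000 ≤ |tau ε h z₁ z₁ z₂| ∧
      |tau ε h z₁ z₁ z₂| ≤ 1000 * (C₀ ^ 2 * ε * ρ ^ 2 * max 1 δ) ∧
      C₀ ^ 2 * ε * ρ ^ 2 * δ / 8 ≤ |tau ε h z₂ z₁ z₂| ∧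
      |tau ε h z₂ z₁ z₂| ≤ 8 * (C₀ ^ 2 * ε * ρ ^ 2 * δ) := by
  refine ⟨8192 * (1 + C₃), by linarith, ?_⟩
  intro h hcub ε ρ δ C₀ hε hε1 hρ hρ1 hδ hk1 _ _ _ hC₀
  intro j₁ j₂ hjlo hjhi hj₁l hj₁r hj₂l hj₂r t₁0 y₂0 x₂0 hadm z₁ hz₁ z₂ hz₂
  obtain ⟨x₁, y₁⟩ := z₁
  obtain ⟨x₂, y₂⟩ := z₂
  obtain ⟨hh, -, -, h2z, h3, -⟩ := hcub
  have hC₃' : ∀ y ∈ Icc (-1:ℝ) 1, |deriv (deriv (deriv h)) y| ≤ C₃ := fun y hy => (h3 y hy).2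
  obtain ⟨-, -, -, -, -, hy₂0a, hy₂0b, htx_l, htx_u, hT_l, hT_u⟩ := hadm
  simp only [U1tset, mem_setOf_eq] at hz₁
  simp only [U2tset, mem_setOf_eq] at hz₂
  obtain ⟨hy₁a, hy₁b, hE₁a, hE₁b⟩ := hz₁
  obtain ⟨hy₂a, hy₂b, hE₂a, hE₂b⟩ := hz₂
  set m := min 1 δ with hm
  set M := max 1 δ with hM
  have hm0 : 0 < m := lt_min one_pos hδ
  have hm1 : m ≤ 1 := min_le_left _ _
  have hmδ : m ≤ δ := min_le_right _ _
  have hM1 : 1 ≤ M := le_max_left _ _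
  have hMδ : δ ≤ M := le_max_right _ _
  have hC₃0 : (0:ℝ) ≤ C₃ := hC₃.le
  have hC₀1 : (1:ℝ) ≤ C₀ := by linarith only [hC₀, hC₃]
  have hjj := abs_lt.1 hjhi
  -- points in Icc
  have hy₁0m : ((j₁:ℝ) * ρ) ∈ Icc (-1:ℝ) 1 := ⟨hj₁l, by linarith only [hj₁r, hρ]⟩
  have hy₁m : y₁ ∈ Icc (-1:ℝ) 1 :=
    ⟨by linarith only [hy₁a, hj₁l], by linarith only [hy₁b, hj₁r]⟩
  have hy₂0m : y₂0 ∈ Icc (-1:ℝ) 1 := by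
    constructor
    · linarith only [hy₂0a, hj₂l]
    · have := mul_pos hρ hm0
      linarith only [this, hy₂0b, hj₂r]
  have hy₂m : y₂ ∈ Icc (-1:ℝ) 1 := by
    constructor
    · linarith only [hy₂a, hy₂0a, hj₂l]
    · linarith only [hy₂b, hy₂0b, hj₂r]
  -- distance bounds
  have hC₀0 : (0:ℝ) ≤ C₀ := by linarith only [hC₀1]
  have h2ρ : 2 * ρ ≤ C₀ * ρ :=
    mul_le_mul_of_nonneg_right (by linarith only [hC₀, hC₃]) hρ.le
  have hρm : ρ * m ≤ ρ := by
    have := mul_le_mul_of_nonneg_left hm1 hρ.le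
    linarith only [this]
  have hd20 : |y₂0 - (j₁:ℝ) * ρ| ≤ C₀ * ρ := by
    rw [abs_le]
    constructor <;> linarith only [mul_lt_mul_of_pos_right hjj.2 hρ,
      mul_lt_mul_of_pos_right hjj.1 hρ, mul_pos hρ hm0, hy₂0a, hy₂0b, h2ρ, hρ]
  have hd12 : |y₂ - y₁| ≤ C₀ * ρ := by
    rw [abs_le]
    constructor <;> linarith only [mul_lt_mul_of_pos_right hjj.2 hρ,
      mul_lt_mul_of_pos_right hjj.1 hρ, mul_pos hρ hm0, hy₂0a, hy₂0b, h2ρ, hρ,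
      hy₂a, hy₂b, hy₁a, hy₁b]
  -- derivative bounds
  have hR : |deriv h y₂ - deriv h y₂0 - deriv (deriv h) y₂0 * (y₂ - y₂0)|
      ≤ C₃ * (y₂ - y₂0)^2 := taylor2' hh hC₃' hy₂0m hy₂m
  have hsq : (y₂ - y₂0)^2 ≤ (ρ * m)^2 := by
    have := pow_le_pow_left₀ hy₂a hy₂b.le 2
    linarith only [this]
  have hmm : m * m ≤ δ := by
    have := mul_le_mul hm1 hmδ hm0.le zero_le_one
    linarith only [this]
  have hmm' : m * m ≤ M := by
    have := mul_le_mul hm1 hm1 hm0.le zero_le_one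
    linarith only [this, hM1]
  have hRδ : C₃ * (y₂ - y₂0)^2 ≤ C₃ * ρ^2 * δ := by
    have a1 := mul_le_mul_of_nonneg_left hsq hC₃0
    have a2 := mul_le_mul_of_nonneg_left hmm
      (mul_nonneg hC₃0 (sq_nonneg ρ))
    linarith only [a1, a2]
  have hRM : C₃ * (y₂ - y₂0)^2 ≤ C₃ * ρ^2 * M := by
    have a1 := mul_le_mul_of_nonneg_left hsq hC₃0
    have a2 := mul_le_mul_of_nonneg_left hmm'
      (mul_nonneg hC₃0 (sq_nonneg ρ))
    linarith only [a1, a2]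
  have hlip22 : |deriv (deriv h) y₂ - deriv (deriv h) y₂0| ≤ C₃ * (ρ * m) := by
    calc |deriv (deriv h) y₂ - deriv (deriv h) y₂0| ≤ C₃ * |y₂ - y₂0| :=
          lip2 hh hC₃' hy₂0m hy₂m
      _ ≤ C₃ * (ρ * m) := by
          rw [abs_of_nonneg hy₂a]
          exact mul_le_mul_of_nonneg_left hy₂b.le hC₃0
  have hlip20 : |deriv (deriv h) y₂0 - deriv (deriv h) ((j₁:ℝ) * ρ)| ≤ C₃ * (C₀ * ρ) := by
    calc |deriv (deriv h) y₂0 - deriv (deriv h) ((j₁:ℝ) * ρ)|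
        ≤ C₃ * |y₂0 - (j₁:ℝ) * ρ| := lip2 hh hC₃' hy₁0m hy₂0m
      _ ≤ C₃ * (C₀ * ρ) := mul_le_mul_of_nonneg_left hd20 hC₃0
  have hlip21 : |deriv (deriv h) ((j₁:ℝ) * ρ) - deriv (deriv h) y₁| ≤ C₃ * ρ := by
    calc |deriv (deriv h) ((j₁:ℝ) * ρ) - deriv (deriv h) y₁|
        = |deriv (deriv h) y₁ - deriv (deriv h) ((j₁:ℝ) * ρ)| := abs_sub_comm _ _
      _ ≤ C₃ * |y₁ - (j₁:ℝ) * ρ| := lip2 hh hC₃' hy₁0m hy₁m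
      _ ≤ C₃ * ρ := by
          rw [abs_of_nonneg hy₁a]
          exact mul_le_mul_of_nonneg_left hy₁b.le hC₃0
  -- abbreviations
  set E₁ := x₁ - t₁0 + ε * (deriv h y₁ - deriv h y₂0
      - deriv (deriv h) y₂0 / 2 * (y₁ - y₂0)) with hE₁
  set E₂ := x₂ - x₂0 + ε * (deriv (deriv h) y₂0 / 2) * (y₂ - y₂0) with hE₂
  have hEd : |E₂ - E₁| ≤ ε * ρ^2 * δ :=
    le_of_lt (abs_lt.2 ⟨by linarith only [hE₁a, hE₁b, hE₂a, hE₂b],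
      by linarith only [hE₁a, hE₁b, hE₂a, hE₂b]⟩)
  set R := deriv h y₂ - deriv h y₂0 - deriv (deriv h) y₂0 * (y₂ - y₂0) with hRdef
  have hk0 : 0 < ε * ρ^2 * δ := by positivity
  have hK0 : 0 < ε * ρ^2 * M := by positivity
  -- ===================== tau₂ =====================
  have id2 : tau ε h (x₂, y₂) (x₁, y₁) (x₂, y₂) - (x₂0 - t₁0)
      = (E₂ - E₁) + ε * (R
        + (deriv (deriv h) y₂ - deriv (deriv h) y₂0) * (y₁ - y₂) / 2) := by
    simp only [tau, hE₁, hE₂, hRdef]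
    ring
  have hprod2 : |(deriv (deriv h) y₂ - deriv (deriv h) y₂0) * (y₁ - y₂) / 2|
      ≤ (C₃ * (ρ * m)) * (C₀ * ρ) / 2 := by
    rw [abs_div, abs_mul, abs_two, abs_sub_comm y₁ y₂]
    have := mul_le_mul hlip22 hd12 (abs_nonneg _) (by positivity)
    linarith only [this]
  have hbd2 : |tau ε h (x₂, y₂) (x₁, y₁) (x₂, y₂) - (x₂0 - t₁0)|
      ≤ C₀^2 / 8 * (ε * ρ^2 * δ) := by
    rw [id2]
    have step : |(E₂ - E₁) + ε * (R
        + (deriv (deriv h) y₂ - deriv (deriv h) y₂0) * (y₁ - y₂) / 2)|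
        ≤ |E₂ - E₁| + ε * (|R| +
          |(deriv (deriv h) y₂ - deriv (deriv h) y₂0) * (y₁ - y₂) / 2|) := by
      have t1 := abs_add_le (E₂ - E₁) (ε * (R
        + (deriv (deriv h) y₂ - deriv (deriv h) y₂0) * (y₁ - y₂) / 2))
      have t2 := abs_add_le R ((deriv (deriv h) y₂ - deriv (deriv h) y₂0) * (y₁ - y₂) / 2)
      rw [abs_mul, abs_of_pos hε] at t1
      have t3 := mul_le_mul_of_nonneg_left t2 hε.le
      linarith only [t1, t3]
    have key : |E₂ - E₁| + ε * (|R| +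
          |(deriv (deriv h) y₂ - deriv (deriv h) y₂0) * (y₁ - y₂) / 2|)
        ≤ (1 + C₃ + C₃ * C₀ / 2) * (ε * ρ^2 * δ) := by
      have hR2 : |R| ≤ C₃ * ρ^2 * δ := le_trans hR hRδ
      have hp2 : |(deriv (deriv h) y₂ - deriv (deriv h) y₂0) * (y₁ - y₂) / 2|
          ≤ C₃ * C₀ / 2 * (ρ^2 * δ) := by
        have := mul_le_mul_of_nonneg_left hmδ
          (show (0:ℝ) ≤ C₃ * C₀ * ρ^2 / 2 by positivity)
        linarith only [this, hprod2]
      have a1 := mul_le_mul_of_nonneg_left hR2 hε.le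
      have a2 := mul_le_mul_of_nonneg_left hp2 hε.le
      linarith only [a1, a2, hEd]
    have hfin : (1 + C₃ + C₃ * C₀ / 2) * (ε * ρ^2 * δ) ≤ C₀^2 / 8 * (ε * ρ^2 * δ) := by
      have hq : 1 + C₃ + C₃ * C₀ / 2 ≤ C₀^2 / 8 := by
        have h1 := const_bound hC₃0 hC₀
        have h2 : (0:ℝ) ≤ C₃ * C₀ := mul_nonneg hC₃0 hC₀0
        linarith only [h1, h2, sq_nonneg C₀]
      exact mul_le_mul_of_nonneg_right hq hk0.le
    linarith only [step, key, hfin]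
  have htau2 : C₀ ^ 2 * ε * ρ ^ 2 * δ / 8 ≤ |tau ε h (x₂, y₂) (x₁, y₁) (x₂, y₂)| ∧
      |tau ε h (x₂, y₂) (x₁, y₁) (x₂, y₂)| ≤ 8 * (C₀ ^ 2 * ε * ρ ^ 2 * δ) := by
    have e1 := abs_sub_abs_le_abs_sub (tau ε h (x₂, y₂) (x₁, y₁) (x₂, y₂)) (x₂0 - t₁0)
    have e2 := abs_sub_abs_le_abs_sub (x₂0 - t₁0) (tau ε h (x₂, y₂) (x₁, y₁) (x₂, y₂))
    rw [abs_sub_comm (x₂0 - t₁0) (tau ε h (x₂, y₂) (x₁, y₁) (x₂, y₂))] at e2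
    have hcomm : |x₂0 - t₁0| = |t₁0 - x₂0| := abs_sub_comm _ _
    have hX : (0:ℝ) < C₀^2 * (ε * ρ^2 * δ) := by positivity
    constructor
    · linarith only [e1, e2, hbd2, htx_l, htx_u, hcomm, hX]
    · linarith only [e1, e2, hbd2, htx_l, htx_u, hcomm, hX]
  -- ===================== tau₁ =====================
  have id1 : tau ε h (x₁, y₁) (x₁, y₁) (x₂, y₂)
        - tau ε h (x10 h ε t₁0 ((j₁ : ℝ) * ρ) y₂0, (j₁ : ℝ) * ρ)
            (x10 h ε t₁0 ((j₁ : ℝ) * ρ) y₂0, (j₁ : ℝ) * ρ) (x₂0, y₂0)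
      = (E₂ - E₁) + ε * (R
        + (deriv (deriv h) y₂0 - deriv (deriv h) ((j₁:ℝ) * ρ))
            * ((y₂ - y₂0) - (y₁ - (j₁:ℝ) * ρ)) / 2
        + (deriv (deriv h) ((j₁:ℝ) * ρ) - deriv (deriv h) y₁) * (y₂ - y₁) / 2) := by
    simp only [tau, x10, hE₁, hE₂, hRdef]
    ring
  have hbd1 : |tau ε h (x₁, y₁) (x₁, y₁) (x₂, y₂)
        - tau ε h (x10 h ε t₁0 ((j₁ : ℝ) * ρ) y₂0, (j₁ : ℝ) * ρ)
            (x10 h ε t₁0 ((j₁ : ℝ) * ρ) y₂0, (j₁ : ℝ) * ρ) (x₂0, y₂0)|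
      ≤ C₀^2 / 2048 * (ε * ρ^2 * M) := by
    rw [id1]
    set A := R
        + (deriv (deriv h) y₂0 - deriv (deriv h) ((j₁:ℝ) * ρ))
            * ((y₂ - y₂0) - (y₁ - (j₁:ℝ) * ρ)) / 2
        + (deriv (deriv h) ((j₁:ℝ) * ρ) - deriv (deriv h) y₁) * (y₂ - y₁) / 2 with hA
    have step : |(E₂ - E₁) + ε * A| ≤ |E₂ - E₁| + ε * |A| := by
      have t1 := abs_add_le (E₂ - E₁) (ε * A)
      rw [abs_mul, abs_of_pos hε] at t1
      linarith only [t1]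
    have hAbd : |A| ≤ C₃ * ρ^2 * M + C₃ * (C₀ * ρ) * (2 * ρ) / 2 + C₃ * ρ * (C₀ * ρ) / 2 := by
      have t2 := abs_add_le (R
        + (deriv (deriv h) y₂0 - deriv (deriv h) ((j₁:ℝ) * ρ))
            * ((y₂ - y₂0) - (y₁ - (j₁:ℝ) * ρ)) / 2)
        ((deriv (deriv h) ((j₁:ℝ) * ρ) - deriv (deriv h) y₁) * (y₂ - y₁) / 2)
      have t3 := abs_add_le R ((deriv (deriv h) y₂0 - deriv (deriv h) ((j₁:ℝ) * ρ))
            * ((y₂ - y₂0) - (y₁ - (j₁:ℝ) * ρ)) / 2)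
      have hd3 : |(y₂ - y₂0) - (y₁ - (j₁:ℝ) * ρ)| ≤ 2 * ρ := by
        rw [abs_le]
        constructor <;> linarith only [hy₂a, hy₂b, hy₁a, hy₁b, hρm, hρ]
      have hp1 : |(deriv (deriv h) y₂0 - deriv (deriv h) ((j₁:ℝ) * ρ))
            * ((y₂ - y₂0) - (y₁ - (j₁:ℝ) * ρ)) / 2| ≤ C₃ * (C₀ * ρ) * (2 * ρ) / 2 := by
        rw [abs_div, abs_mul, (by norm_num : |(2:ℝ)| = 2)]
        have := mul_le_mul hlip20 hd3 (abs_nonneg _) (by positivity)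
        linarith only [this]
      have hp2 : |(deriv (deriv h) ((j₁:ℝ) * ρ) - deriv (deriv h) y₁) * (y₂ - y₁) / 2|
          ≤ C₃ * ρ * (C₀ * ρ) / 2 := by
        rw [abs_div, abs_mul, (by norm_num : |(2:ℝ)| = 2)]
        have := mul_le_mul hlip21 hd12 (abs_nonneg _) (by positivity)
        linarith only [this]
      have hRM' : |R| ≤ C₃ * ρ^2 * M := le_trans hR hRM
      rw [hA]
      linarith only [t2, t3, hp1, hp2, hRM']
    have key : |E₂ - E₁| + ε * |A| ≤ (1 + C₃ + 3 * C₃ * C₀ / 2) * (ε * ρ^2 * M) := by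
      have h1 : ε * ρ^2 * δ ≤ ε * ρ^2 * M :=
        mul_le_mul_of_nonneg_left hMδ (by positivity)
      have h2 : ε * |A| ≤ ε * (C₃ * ρ^2 * M + C₃ * (C₀ * ρ) * (2 * ρ) / 2
          + C₃ * ρ * (C₀ * ρ) / 2) := mul_le_mul_of_nonneg_left hAbd hε.le
      have h3 : C₃ * C₀ * ε * ρ^2 * 1 ≤ C₃ * C₀ * ε * ρ^2 * M :=
        mul_le_mul_of_nonneg_left hM1 (by positivity)
      linarith only [h1, h2, h3, hEd]
    have hfin : (1 + C₃ + 3 * C₃ * C₀ / 2) * (ε * ρ^2 * M)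
        ≤ C₀^2 / 2048 * (ε * ρ^2 * M) := by
      have hq : 1 + C₃ + 3 * C₃ * C₀ / 2 ≤ C₀^2 / 2048 :=
        const_bound hC₃0 hC₀
      exact mul_le_mul_of_nonneg_right hq hK0.le
    linarith only [step, key, hfin]
  have htau1 : C₀ ^ 2 * ε * ρ ^ 2 * M / 1000 ≤ |tau ε h (x₁, y₁) (x₁, y₁) (x₂, y₂)| ∧
      |tau ε h (x₁, y₁) (x₁, y₁) (x₂, y₂)| ≤ 1000 * (C₀ ^ 2 * ε * ρ ^ 2 * M) := by
    set T := tau ε h (x10 h ε t₁0 ((j₁ : ℝ) * ρ) y₂0, (j₁ : ℝ) * ρ)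
            (x10 h ε t₁0 ((j₁ : ℝ) * ρ) y₂0, (j₁ : ℝ) * ρ) (x₂0, y₂0) with hT
    have e1 := abs_sub_abs_le_abs_sub (tau ε h (x₁, y₁) (x₁, y₁) (x₂, y₂)) T
    have e2 := abs_sub_abs_le_abs_sub T (tau ε h (x₁, y₁) (x₁, y₁) (x₂, y₂))
    rw [abs_sub_comm T (tau ε h (x₁, y₁) (x₁, y₁) (x₂, y₂))] at e2
    have hX : (0:ℝ) < C₀^2 * (ε * ρ^2 * M) := by positivity
    constructor
    · linarith only [e1, e2, hbd1, hT_l, hT_u, hX]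
    · linarith only [e1, e2, hbd1, hT_l, hT_u, hX]
  exact ⟨htau1.1, htau1.2, htau2.1, htau2.2⟩
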